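/- arXiv:2505.07505 — 2 statements merged into one kernel-verified Lean document; each statement's English description precedes it below -/
import Mathlib

section
/- Let f : ℤ^2 → ℂ be supported in B_r ∩ ℤ^2 for some r > 0. For z ∈ ℤ^2 \ {0} let γ_z be the line through z perpendicular to z (direction ẑ_⋆ = (−z_2, z_1)/|z|), and for z = 0 let γ_0 be a fixed line through 0 with rational direction. If Pf(γ_z) = 0 for all z ∈ ℤ^2, then f ≡ 0, where Pf(γ) = Σ_{y ∈ γ ∩ ℤ^2} f(y). -/
open RealInnerProductSpace

noncomputable def L (d : ℕ) (z : Fin d → ℤ) : EuclideanSpace ℝ (Fin d) := WithLp.toLp 2 (fun i => (z i : ℝ))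

noncomputable def zstar (z : Fin 2 → ℤ) : EuclideanSpace ℝ (Fin 2) :=
  ‖L 2 z‖⁻¹ • (WithLp.toLp 2 ![-(z 1 : ℝ), (z 0 : ℝ)] : EuclideanSpace ℝ (Fin 2))

lemma line_dot (z y : Fin 2 → ℤ) (ht : ∃ t : ℝ, L 2 y = L 2 z + t • zstar z) :
    y 0 * z 0 + y 1 * z 1 = z 0 ^ 2 + z 1 ^ 2 := by
  obtain ⟨t, hth⟩ := ht
  have h0 := congr_arg (fun v => v 0) hth
  have h1 := congr_arg (fun v => v 1) hth
  simp only [L, zstar, PiLp.toLp_apply, PiLp.add_apply, PiLp.smul_apply, Matrix.smul_cons, Matrix.smul_empty,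
    Matrix.cons_val_zero, Matrix.cons_val_one, Matrix.head_cons, smul_eq_mul] at h0 h1
  have : ((y 0 * z 0 + y 1 * z 1 : ℤ) : ℝ) = ((z 0 ^ 2 + z 1 ^ 2 : ℤ) : ℝ) := by
    push_cast
    rw [h0, h1]; ring
  exact_mod_cast this

lemma sq_ge_one (a : ℤ) (ha : a ≠ 0) : 1 ≤ a ^ 2 := by
  rcases ha.lt_or_gt with h | h <;> nlinarith

lemma nz_sq (y : Fin 2 → ℤ) (hy : y ≠ 0) : 1 ≤ y 0 ^ 2 + y 1 ^ 2 := by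
  by_cases h0 : y 0 = 0
  · have h1 : y 1 ≠ 0 := by
      intro h1; apply hy; funext i; fin_cases i <;> simpa
    nlinarith [sq_ge_one _ h1, sq_nonneg (y 0)]
  · nlinarith [sq_ge_one _ h0, sq_nonneg (y 1)]

theorem stmt4 (r : ℝ) (hr : 0 < r) (f : (Fin 2 → ℤ) → ℂ)
    (hf : ∀ z, f z ≠ 0 → ‖L 2 z‖ ≤ r)
    (z0 : Fin 2 → ℤ) (hz0 : z0 ≠ 0)
    (h0 : ∑' y : {y : Fin 2 → ℤ // ∃ t : ℝ, L 2 y = t • L 2 z0}, f y = 0)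
    (h : ∀ z : Fin 2 → ℤ, z ≠ 0 →
      ∑' y : {y : Fin 2 → ℤ // ∃ t : ℝ, L 2 y = L 2 z + t • zstar z}, f y = 0) :
    ∀ z, f z = 0 := by
  have key : ∀ k : ℕ, ∀ z : Fin 2 → ℤ, (⌈r ^ 2⌉ + 1 - k : ℤ) ≤ z 0 ^ 2 + z 1 ^ 2 →
      f z = 0 := by
    intro k
    induction k with
    | zero =>
      intro z hzk
      by_contra hfz
      have h1 := hf z hfz
      have h2 : ‖L 2 z‖ ^ 2 ≤ r ^ 2 := by nlinarith [norm_nonneg (L 2 z)]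
      have h3 : ‖L 2 z‖ ^ 2 = (z 0 : ℝ) ^ 2 + (z 1 : ℝ) ^ 2 := by
        rw [EuclideanSpace.norm_eq, Real.sq_sqrt (by positivity)]
        simp [L, Fin.sum_univ_two]
      have h4 : ((⌈r ^ 2⌉ + 1 : ℤ) : ℝ) ≤ (z 0 : ℝ) ^ 2 + (z 1 : ℝ) ^ 2 := by
        have : (⌈r ^ 2⌉ + 1 : ℤ) ≤ z 0 ^ 2 + z 1 ^ 2 := by simpa using hzk
        exact_mod_cast this
      have h5 := Int.le_ceil (r ^ 2)
      push_cast at h4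
      linarith
    | succ k ih =>
      intro z hzk
      rcases le_or_gt ((⌈r ^ 2⌉ : ℤ) + 1 - k) (z 0 ^ 2 + z 1 ^ 2) with h' | h'
      · exact ih z h'
      by_cases hzz : z = 0
      · subst hzz
        have hmem : ∃ t : ℝ, L 2 (0 : Fin 2 → ℤ) = t • L 2 z0 := by
          refine ⟨0, ?_⟩
          ext i
          simp [L]
        have hsum := tsum_eq_single (L := SummationFilter.unconditional _) (f := fun y : {y : Fin 2 → ℤ // ∃ t : ℝ, L 2 y = t • L 2 z0} => f y)
          (⟨0, hmem⟩ : {y : Fin 2 → ℤ // ∃ t : ℝ, L 2 y = t • L 2 z0}) ?_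
        · rw [h0] at hsum; exact hsum.symm
        · rintro ⟨y, hy⟩ hne
          have hyne : y ≠ 0 := by
            intro hy0; apply hne; exact Subtype.ext hy0
          show f y = 0
          apply ih
          have := nz_sq y hyne
          simp only [Pi.zero_apply] at hzk h'
          omega
      · have hmem : ∃ t : ℝ, L 2 z = L 2 z + t • zstar z := by
          refine ⟨0, ?_⟩; simp
        have hsum := tsum_eq_single (L := SummationFilter.unconditional _)
          (f := fun y : {y : Fin 2 → ℤ // ∃ t : ℝ, L 2 y = L 2 z + t • zstar z} => f y)
          (⟨z, hmem⟩ : {y : Fin 2 → ℤ // ∃ t : ℝ, L 2 y = L 2 z + t • zstar z}) ?_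
        · rw [h z hzz] at hsum; exact hsum.symm
        · rintro ⟨y, hy⟩ hne
          have hyne : y ≠ z := fun hy0 => hne (Subtype.ext hy0)
          have hdot := line_dot z y hy
          have hd : 1 ≤ (y 0 - z 0) ^ 2 + (y 1 - z 1) ^ 2 := by
            apply nz_sq (fun i => y i - z i) ?_ |>.trans_eq rfl
            intro hc
            apply hyne
            funext i
            have := congr_fun hc i
            simp at this
            omega
          show f y = 0
          apply ih
          have e : (y 0 - z 0) ^ 2 + (y 1 - z 1) ^ 2 = y 0 ^ 2 + y 1 ^ 2 - (z 0 ^ 2 + z 1 ^ 2) := by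
            linear_combination (-2 : ℤ) * hdot
          push_cast at hzk ⊢
          linarith
  intro z
  apply key (⌈r ^ 2⌉ + 1).toNat z
  have h1 : (0 : ℤ) ≤ ⌈r ^ 2⌉ := Int.ceil_nonneg (by positivity)
  rw [Int.toNat_of_nonneg (by omega)]
  nlinarith [sq_nonneg (z 0), sq_nonneg (z 1)]
end

section
/- Let f : ℤ^2 → ℂ be supported in B_r ∩ ℤ^2, and let 0 ≤ α ≤ β with β ≥ r. Then the values Pf(γ_z) for all z ∈ ℤ^2 with α ≤ |z| ≤ β uniquely determine f(z) for all z ∈ ℤ^2 with α ≤ |z| ≤ β. -/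
open RealInnerProductSpace
lemma L_inj {y z : Fin 2 → ℤ} (h : L 2 y = L 2 z) : y = z :=
  funext fun i => Int.cast_injective (α := ℝ) (congrArg (fun v : EuclideanSpace ℝ (Fin 2) => v i) h)

lemma L_zero : L 2 (0 : Fin 2 → ℤ) = 0 := by
  ext i; simp [L]

lemma normL_sq (z : Fin 2 → ℤ) : ‖L 2 z‖^2 = (z 0:ℝ)^2 + (z 1:ℝ)^2 := by
  rw [EuclideanSpace.norm_eq, Real.sq_sqrt (by positivity)]
  simp [L, Fin.sum_univ_two, sq_abs]

lemma normL_pos {z : Fin 2 → ℤ} (hz : z ≠ 0) : 0 < ‖L 2 z‖ := by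
  rw [norm_pos_iff]
  intro h
  exact hz (L_inj (h.trans L_zero.symm))

lemma inner_zstar (z : Fin 2 → ℤ) : ⟪L 2 z, zstar z⟫ = 0 := by
  simp only [zstar, real_inner_smul_right, PiLp.inner_apply, RCLike.inner_apply, conj_trivial]
  rw [Fin.sum_univ_two]
  simp [L]
  ring

lemma norm_zstar {z : Fin 2 → ℤ} (hz : z ≠ 0) : ‖zstar z‖ = 1 := by
  have h2 : ⟪zstar z, zstar z⟫ =
      ‖L 2 z‖⁻¹ * (‖L 2 z‖⁻¹ * ((-(z 1:ℝ))*(-(z 1:ℝ)) + (z 0:ℝ)*(z 0:ℝ))) := by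
    rw [zstar, real_inner_smul_left, real_inner_smul_right, PiLp.inner_apply, Fin.sum_univ_two]
    simp [zstar, real_inner_smul_left, real_inner_smul_right, PiLp.inner_apply,
      Fin.sum_univ_two, mul_assoc]
    exact Or.inl (by ring)
  have hpos := normL_pos hz
  have hsq := normL_sq z
  have h3 : ⟪zstar z, zstar z⟫ = 1 := by
    rw [h2]
    field_simp
    nlinarith
  have h4 : ‖zstar z‖ ^ 2 = 1 := by
    rw [← real_inner_self_eq_norm_sq, h3]
  nlinarith [norm_nonneg (zstar z)]

lemma line_norm {z y : Fin 2 → ℤ} (hz : z ≠ 0) (t : ℝ)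
    (hy : L 2 y = L 2 z + t • zstar z) : y = z ∨ ‖L 2 z‖ < ‖L 2 y‖ := by
  rcases eq_or_ne t 0 with ht | ht
  · left; apply L_inj; rw [hy, ht, zero_smul, add_zero]
  · right
    have horth : ⟪L 2 z, t • zstar z⟫ = 0 := by
      rw [real_inner_smul_right, inner_zstar, mul_zero]
    have hsq : ‖L 2 y‖^2 = ‖L 2 z‖^2 + t^2 := by
      rw [hy, norm_add_sq_real, horth, norm_smul, norm_zstar hz, Real.norm_eq_abs]
      rw [mul_one, sq_abs]; ring
    have ht2 : 0 < t^2 := by positivity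
    nlinarith [norm_nonneg (L 2 y), norm_nonneg (L 2 z)]

lemma finite_ball (R : ℝ) : {z : Fin 2 → ℤ | ‖L 2 z‖ ≤ R}.Finite := by
  apply Set.Finite.subset (Set.finite_Icc (fun _ => -⌈R⌉) (fun _ => ⌈R⌉))
  intro z hz
  simp only [Set.mem_setOf_eq] at hz
  have key : ∀ i, |(z i : ℝ)| ≤ R := by
    rw [Fin.forall_fin_two]
    constructor <;>
      nlinarith [normL_sq z, abs_nonneg ((z 0 : ℝ)), abs_nonneg ((z 1 : ℝ)),
        sq_abs ((z 0 : ℝ)), sq_abs ((z 1 : ℝ)), sq_nonneg ((z 0 : ℝ)),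
        sq_nonneg ((z 1 : ℝ)), norm_nonneg (L 2 z)]
  have key2 : ∀ i, -⌈R⌉ ≤ z i ∧ z i ≤ ⌈R⌉ := by
    intro i
    have hc : ((|z i| : ℤ) : ℝ) ≤ (⌈R⌉ : ℝ) := by
      push_cast
      exact (key i).trans (Int.le_ceil R)
    have h3 : |z i| ≤ ⌈R⌉ := by exact_mod_cast hc
    exact abs_le.mp h3
  exact ⟨fun i => (key2 i).1, fun i => (key2 i).2⟩

lemma tsum_diff (r : ℝ) (f g : (Fin 2 → ℤ) → ℂ)
    (hf : ∀ z, f z ≠ 0 → ‖L 2 z‖ ≤ r) (hg : ∀ z, g z ≠ 0 → ‖L 2 z‖ ≤ r)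
    (P : (Fin 2 → ℤ) → Prop) (z : Fin 2 → ℤ) (hzP : P z)
    (hothers : ∀ y, P y → y ≠ z → f y = g y)
    (hsum : ∑' y : {y : Fin 2 → ℤ // P y}, f y = ∑' y : {y : Fin 2 → ℤ // P y}, g y) :
    f z = g z := by
  have hfin : ({y : {y : Fin 2 → ℤ // P y} | ‖L 2 y.val‖ ≤ r}).Finite := by
    have : {y : {y : Fin 2 → ℤ // P y} | ‖L 2 y.val‖ ≤ r} =
        Subtype.val ⁻¹' {w : Fin 2 → ℤ | ‖L 2 w‖ ≤ r} := rfl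
    rw [this]
    exact (finite_ball r).preimage (Subtype.val_injective.injOn)
  have hfsum : Summable (fun y : {y : Fin 2 → ℤ // P y} => f y.val) := by
    apply summable_of_ne_finset_zero (s := hfin.toFinset)
    intro y hy
    by_contra hne
    exact hy (hfin.mem_toFinset.mpr (hf y.val hne))
  have hgsum : Summable (fun y : {y : Fin 2 → ℤ // P y} => g y.val) := by
    apply summable_of_ne_finset_zero (s := hfin.toFinset)
    intro y hy
    by_contra hne
    exact hy (hfin.mem_toFinset.mpr (hg y.val hne))
  have h1 : ∑' y : {y : Fin 2 → ℤ // P y}, (f y.val - g y.val) = 0 := by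
    rw [Summable.tsum_sub hfsum hgsum, hsum, sub_self]
  rw [tsum_eq_single (⟨z, hzP⟩ : {y : Fin 2 → ℤ // P y}) (fun y hy => by
    have hne : y.val ≠ z := fun e => hy (Subtype.ext e)
    rw [hothers y.val y.2 hne, sub_self])] at h1
  exact sub_eq_zero.mp h1

theorem stmt5 (r α β : ℝ) (hr : 0 < r) (hα : 0 ≤ α) (hαβ : α ≤ β) (hβ : r ≤ β)
    (f g : (Fin 2 → ℤ) → ℂ)
    (hf : ∀ z, f z ≠ 0 → ‖L 2 z‖ ≤ r) (hg : ∀ z, g z ≠ 0 → ‖L 2 z‖ ≤ r)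
    (z0 : Fin 2 → ℤ) (hz0 : z0 ≠ 0)
    (h0 : α ≤ 0 →
      ∑' y : {y : Fin 2 → ℤ // ∃ t : ℝ, L 2 y = t • L 2 z0}, f y =
      ∑' y : {y : Fin 2 → ℤ // ∃ t : ℝ, L 2 y = t • L 2 z0}, g y)
    (h : ∀ z : Fin 2 → ℤ, z ≠ 0 → α ≤ ‖L 2 z‖ → ‖L 2 z‖ ≤ β →
      ∑' y : {y : Fin 2 → ℤ // ∃ t : ℝ, L 2 y = L 2 z + t • zstar z}, f y =
      ∑' y : {y : Fin 2 → ℤ // ∃ t : ℝ, L 2 y = L 2 z + t • zstar z}, g y) :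
    ∀ z : Fin 2 → ℤ, α ≤ ‖L 2 z‖ → ‖L 2 z‖ ≤ β → f z = g z := by
  -- S z: lattice points in the support ball strictly farther out than z
  set S : (Fin 2 → ℤ) → Set (Fin 2 → ℤ) :=
    fun z => {w : Fin 2 → ℤ | ‖L 2 w‖ ≤ r ∧ ‖L 2 z‖ < ‖L 2 w‖} with hS
  have hSfin : ∀ z, (S z).Finite := fun z => (finite_ball r).subset (fun w hw => hw.1)
  have key : ∀ n : ℕ, ∀ z : Fin 2 → ℤ, z ≠ 0 → α ≤ ‖L 2 z‖ → ‖L 2 z‖ ≤ β →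
      (S z).ncard ≤ n → f z = g z := by
    intro n
    induction n using Nat.strong_induction_on with
    | _ n IH =>
      intro z hz hzα hzβ hcard
      apply tsum_diff r f g hf hg _ z ⟨0, by rw [zero_smul, add_zero]⟩ _ (h z hz hzα hzβ)
      rintro y ⟨t, hyt⟩ hyne
      rcases line_norm hz t hyt with he | hlt
      · exact absurd he hyne
      · by_cases hyr : ‖L 2 y‖ ≤ r
        · -- y is in S z; apply induction
          have hySz : y ∈ S z := ⟨hyr, hlt⟩
          have hsub : S y ⊆ S z := fun w hw => ⟨hw.1, hlt.trans hw.2⟩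
          have hss : S y ⊂ S z := ⟨hsub, fun hc => lt_irrefl _ (hc hySz).2⟩
          have hlt2 : (S y).ncard < (S z).ncard := Set.ncard_lt_ncard hss (hSfin z)
          have hy0 : y ≠ 0 := by
            intro he
            rw [he, L_zero, norm_zero] at hlt
            exact absurd hlt (not_lt.mpr (norm_nonneg _))
          exact IH (S y).ncard (lt_of_lt_of_le hlt2 hcard) y hy0
            (hzα.trans hlt.le) (hyr.trans hβ) le_rfl
        · rw [not_le] at hyr
          have hf0 : f y = 0 := by
            by_contra hc; exact absurd (hf y hc) (not_le.mpr hyr)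
          have hg0 : g y = 0 := by
            by_contra hc; exact absurd (hg y hc) (not_le.mpr hyr)
          rw [hf0, hg0]
  intro z hz1 hz2
  by_cases hz : z = 0
  · subst hz
    have hn0 : ‖L 2 (0 : Fin 2 → ℤ)‖ = 0 := by rw [L_zero, norm_zero]
    have hα0 : α ≤ 0 := by rwa [hn0] at hz1
    apply tsum_diff r f g hf hg _ 0 ⟨0, by rw [zero_smul, L_zero]⟩ _ (h0 hα0)
    rintro y ⟨t, hyt⟩ hyne
    have hypos : 0 < ‖L 2 y‖ := normL_pos hyne
    by_cases hyr : ‖L 2 y‖ ≤ r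
    · exact key (S y).ncard y hyne (hα0.trans hypos.le) (hyr.trans hβ) le_rfl
    · rw [not_le] at hyr
      have hf0 : f y = 0 := by
        by_contra hc; exact absurd (hf y hc) (not_le.mpr hyr)
      have hg0 : g y = 0 := by
        by_contra hc; exact absurd (hg y hc) (not_le.mpr hyr)
      rw [hf0, hg0]
  · exact key (S z).ncard z hz hz1 hz2 le_rfl
end
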